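/- Suppose ν ∈ ℝ^m and μ ∈ ℝ^n have all entries strictly positive and T_E(ν,μ) is nonempty, with CRP decomposition (I_l ∪ J_l)_{l=1,…,d} and CRP-graph relation R. Then there exist a sink l_⋆ ∈ {1,…,d} (a vertex with no outgoing R-edge: ∀ b, ¬R(l_⋆, b)) and a source l^⋆ ∈ {1,…,d} (a vertex with no incoming R-edge: ∀ a, ¬R(a, l^⋆)) such that for every i⋆ ∈ I_{l_⋆}, every j⋆ ∈ J_{l^⋆}, and every (u,v) ∈ I × J, the ERP number of T_{E∪{(i⋆,j⋆)}}(ν,μ) is at most the ERP number of T_{E∪{(u,v)}}(ν,μ). -/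

import Mathlib

open scoped Classical

noncomputable section

variable {m n : ℕ}

/-- The transportation polytope `T_E(ν,μ)`: nonnegative `m × n` matrices with row sums `ν`,
column sums `μ`, supported on the edge set `E`. -/
def transportationPolytope (ν : Fin m → ℝ) (μ : Fin n → ℝ)
    (E : Finset (Fin m × Fin n)) : Set (Fin m → Fin n → ℝ) :=
  {x | (∀ i j, 0 ≤ x i j) ∧ (∀ i, ∑ j, x i j = ν i) ∧
    (∀ j, ∑ i, x i j = μ j) ∧ ∀ i j, (i, j) ∉ E → x i j = 0}

/-- The neighborhood `N_F(S) = {j : ∃ i ∈ S, (i,j) ∈ F}`. -/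
def nbr (F : Finset (Fin m × Fin n)) (S : Finset (Fin m)) : Finset (Fin n) :=
  Finset.univ.filter fun j => ∃ i ∈ S, (i, j) ∈ F

/-- `ν` satisfies the capacity condition for `(μ, E)`. -/
def capacityCond (ν : Fin m → ℝ) (μ : Fin n → ℝ) (E : Finset (Fin m × Fin n)) : Prop :=
  ∀ S : Finset (Fin m), ∑ i ∈ S, ν i ≤ ∑ j ∈ nbr E S, μ j

/-- The CRP condition for `(ν, μ, E)`. -/
def crpCond (ν : Fin m → ℝ) (μ : Fin n → ℝ) (E : Finset (Fin m × Fin n)) : Prop :=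
  (∑ i, ν i) = (∑ j, μ j) ∧
  ∀ S : Finset (Fin m), S.Nonempty → S ≠ Finset.univ →
    ∑ i ∈ S, ν i < ∑ j ∈ nbr E S, μ j

/-- The bipartite simple graph `G(F)` on `I ⊔ J` determined by the edge set `F`. -/
def bipartiteGraph (F : Finset (Fin m × Fin n)) : SimpleGraph (Fin m ⊕ Fin n) :=
  SimpleGraph.fromRel fun u v => ∃ i j, u = Sum.inl i ∧ v = Sum.inr j ∧ (i, j) ∈ F

/-- The number of connected components of `G(F)`. -/
def numComponents (F : Finset (Fin m × Fin n)) : ℕ :=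
  Nat.card (bipartiteGraph F).ConnectedComponent

/-- The set `E_r` of redundant edges of `T_E(ν,μ)`. -/
def redundantEdges (ν : Fin m → ℝ) (μ : Fin n → ℝ)
    (E : Finset (Fin m × Fin n)) : Finset (Fin m × Fin n) :=
  E.filter fun e => ∀ x ∈ transportationPolytope ν μ E, x e.1 e.2 = 0

/-- The ERP number of `T_E(ν,μ)`: the number of connected components of `G(E ∖ E_r)`. -/
def erpNumber (ν : Fin m → ℝ) (μ : Fin n → ℝ) (E : Finset (Fin m × Fin n)) : ℕ :=
  numComponents (E \ redundantEdges ν μ E)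

/-- The support edge set `B(x) = {(i,j) ∈ E : x_{ij} > 0}`. -/
def supportEdges (E : Finset (Fin m × Fin n)) (x : Fin m → Fin n → ℝ) :
    Finset (Fin m × Fin n) :=
  E.filter fun e => 0 < x e.1 e.2

/-- The indicator vector `𝟙_S ∈ ℝ^m` of `S ⊆ I`. -/
def indicatorVec (S : Finset (Fin m)) : Fin m → ℝ := fun i => if i ∈ S then 1 else 0

/-- `S ⊆ I` is binding if `∑_{i∈S} ν_i = ∑_{j∈N_E(S)} μ_j`. -/
def IsBinding (ν : Fin m → ℝ) (μ : Fin n → ℝ) (E : Finset (Fin m × Fin n))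
    (S : Finset (Fin m)) : Prop :=
  (∑ i ∈ S, ν i) = ∑ j ∈ nbr E S, μ j

/-- The greatest common divisor of all `m + n` components of `ν` and `μ`. -/
def gcdVec (ν : Fin m → ℕ) (μ : Fin n → ℕ) : ℕ :=
  Nat.gcd (Finset.univ.gcd ν) (Finset.univ.gcd μ)

/-- `d_⋆ = max {1, m + n − (∑ᵢ νᵢ) / gcd(ν,μ)}`. -/
def dStar (ν : Fin m → ℕ) (μ : Fin n → ℕ) : ℕ :=
  max 1 (m + n - (∑ i, ν i) / gcdVec ν μ)

/-- The CRP-gap `δ_F(ν,μ)` of the edge set `F` (computed with respect to the redundant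
edges of `T_F(ν,μ)`). -/
def crpGap (ν : Fin m → ℝ) (μ : Fin n → ℝ) (F : Finset (Fin m × Fin n)) : ℝ :=
  sInf {t : ℝ | ∃ C : Finset (Fin m),
    (∑ i ∈ C, ν i) < (∑ j ∈ nbr (F \ redundantEdges ν μ F) C, μ j) ∧
    t = (∑ j ∈ nbr F C, μ j) - ∑ i ∈ C, ν i}

/-- The CRP-graph relation `R` on the connected components of `G(E ∖ E_r)`:
`R c₁ c₂` holds iff `c₁ ≠ c₂` and some edge `(i,j) ∈ E` has `i` in the demand side of `c₁`
and `j` in the supply side of `c₂`. -/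
def crpRel (ν : Fin m → ℝ) (μ : Fin n → ℝ) (E : Finset (Fin m × Fin n)) :
    (bipartiteGraph (E \ redundantEdges ν μ E)).ConnectedComponent →
    (bipartiteGraph (E \ redundantEdges ν μ E)).ConnectedComponent → Prop :=
  fun c₁ c₂ => c₁ ≠ c₂ ∧ ∃ i j, (i, j) ∈ E ∧
    (bipartiteGraph (E \ redundantEdges ν μ E)).connectedComponentMk (Sum.inl i) = c₁ ∧
    (bipartiteGraph (E \ redundantEdges ν μ E)).connectedComponentMk (Sum.inr j) = c₂

end

noncomputable section Aux
open SimpleGraph Finset Relation Sum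

-- Finite components
example (F : Finset (Fin m × Fin n)) : Finite (bipartiteGraph F).ConnectedComponent := by
  infer_instance

abbrev Fne (ν : Fin m → ℝ) (μ : Fin n → ℝ) (E : Finset (Fin m × Fin n)) :
    Finset (Fin m × Fin n) := E \ redundantEdges ν μ E

abbrev cpt (ν : Fin m → ℝ) (μ : Fin n → ℝ) (E : Finset (Fin m × Fin n)) :
    (Fin m ⊕ Fin n) → (bipartiteGraph (Fne ν μ E)).ConnectedComponent :=
  (bipartiteGraph (Fne ν μ E)).connectedComponentMk

variable (ν : Fin m → ℝ) (μ : Fin n → ℝ) (E : Finset (Fin m × Fin n))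

lemma TP_mono {E' : Finset (Fin m × Fin n)} (h : E ⊆ E') :
    transportationPolytope ν μ E ⊆ transportationPolytope ν μ E' := by
  rintro x ⟨h0, h1, h2, h3⟩
  exact ⟨h0, h1, h2, fun i j hij => h3 i j fun hc => hij (h hc)⟩

lemma supp_TP {E' : Finset (Fin m × Fin n)} {x} (hx : x ∈ transportationPolytope ν μ E') {i j}
    (h : (i, j) ∉ E') : x i j = 0 := hx.2.2.2 i j h

lemma supp_F {x} (hx : x ∈ transportationPolytope ν μ E) {i j} (h : (i, j) ∉ Fne ν μ E) :
    x i j = 0 := by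
  by_cases hE : (i, j) ∈ E
  · have hr : (i, j) ∈ redundantEdges ν μ E := by
      by_contra hc
      exact h (Finset.mem_sdiff.2 ⟨hE, hc⟩)
    exact (Finset.mem_filter.1 hr).2 x hx
  · exact supp_TP ν μ hx hE

lemma adjF (F : Finset (Fin m × Fin n)) {i j} (h : (i, j) ∈ F) :
    (bipartiteGraph F).Adj (Sum.inl i) (Sum.inr j) := by
  rw [bipartiteGraph, SimpleGraph.fromRel_adj]
  exact ⟨by simp, Or.inl ⟨i, j, rfl, rfl, h⟩⟩

lemma cpt_eq_of_memF {i j} (h : (i, j) ∈ Fne ν μ E) :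
    cpt ν μ E (Sum.inl i) = cpt ν μ E (Sum.inr j) :=
  SimpleGraph.ConnectedComponent.eq.2 (adjF _ h).reachable

lemma bgraph_mono {F F' : Finset (Fin m × Fin n)} (h : F ⊆ F') :
    bipartiteGraph F ≤ bipartiteGraph F' := by
  intro u v huv
  rw [bipartiteGraph, SimpleGraph.fromRel_adj] at huv ⊢
  obtain ⟨hne, h1 | h1⟩ := huv
  · obtain ⟨i, j, rfl, rfl, hij⟩ := h1
    exact ⟨hne, Or.inl ⟨i, j, rfl, rfl, h hij⟩⟩
  · obtain ⟨i, j, rfl, rfl, hij⟩ := h1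
    exact ⟨hne, Or.inr ⟨i, j, rfl, rfl, h hij⟩⟩

lemma F_mono {E' : Finset (Fin m × Fin n)} (h : E ⊆ E') :
    Fne ν μ E ⊆ Fne ν μ E' := by
  intro e he
  rw [Finset.mem_sdiff] at he ⊢
  refine ⟨h he.1, fun hc => he.2 ?_⟩
  simp only [redundantEdges, Finset.mem_filter] at hc ⊢
  exact ⟨he.1, fun x hx => hc.2 x (TP_mono ν μ E h hx)⟩

/-- balance over any component-predicate -/
lemma balance (hne : (transportationPolytope ν μ E).Nonempty)
    (p : (bipartiteGraph (Fne ν μ E)).ConnectedComponent → Prop) :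
    ∑ i ∈ univ.filter (fun i => p (cpt ν μ E (Sum.inl i))), ν i
      = ∑ j ∈ univ.filter (fun j => p (cpt ν μ E (Sum.inr j))), μ j := by
  obtain ⟨x, hx⟩ := hne
  obtain ⟨h0, h1, h2, h3⟩ := hx
  set Ip := univ.filter (fun i => p (cpt ν μ E (Sum.inl i))) with hIp
  set Jp := univ.filter (fun j => p (cpt ν μ E (Sum.inr j))) with hJp
  have key : ∀ i ∈ Ip, ∀ j, j ∉ Jp → x i j = 0 := by
    intro i hi j hj
    by_contra hc
    have hF : (i, j) ∈ Fne ν μ E := by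
      by_contra hF
      exact hc (supp_F ν μ E ⟨h0, h1, h2, h3⟩ hF)
    have := cpt_eq_of_memF ν μ E hF
    rw [hIp, Finset.mem_filter] at hi
    exact hj (Finset.mem_filter.2 ⟨Finset.mem_univ _, this ▸ hi.2⟩)
  have key2 : ∀ j ∈ Jp, ∀ i, i ∉ Ip → x i j = 0 := by
    intro j hj i hi
    by_contra hc
    have hF : (i, j) ∈ Fne ν μ E := by
      by_contra hF
      exact hc (supp_F ν μ E ⟨h0, h1, h2, h3⟩ hF)
    have := cpt_eq_of_memF ν μ E hF
    rw [hJp, Finset.mem_filter] at hj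
    exact hi (Finset.mem_filter.2 ⟨Finset.mem_univ _, this ▸ hj.2⟩)
  calc ∑ i ∈ Ip, ν i = ∑ i ∈ Ip, ∑ j, x i j := by
        exact Finset.sum_congr rfl fun i _ => (h1 i).symm
    _ = ∑ i ∈ Ip, ∑ j ∈ Jp, x i j := by
        refine Finset.sum_congr rfl fun i hi => ?_
        exact (Finset.sum_subset (Finset.subset_univ _)
          (fun j _ hj => key i hi j hj)).symm
    _ = ∑ j ∈ Jp, ∑ i ∈ Ip, x i j := Finset.sum_comm
    _ = ∑ j ∈ Jp, ∑ i, x i j := by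
        refine Finset.sum_congr rfl fun j hj => ?_
        exact Finset.sum_subset (Finset.subset_univ _) (fun i _ hi => key2 j hj i hi)
    _ = ∑ j ∈ Jp, μ j := Finset.sum_congr rfl fun j _ => h2 j

/-- binding-set redundancy lemma -/
lemma binding (hne : (transportationPolytope ν μ E).Nonempty)
    {E' : Finset (Fin m × Fin n)}
    (p : (bipartiteGraph (Fne ν μ E)).ConnectedComponent → Prop)
    (hcl : ∀ i j, (i, j) ∈ E' → p (cpt ν μ E (Sum.inr j)) → p (cpt ν μ E (Sum.inl i)))
    {x} (hx : x ∈ transportationPolytope ν μ E') {i j}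
    (hpi : p (cpt ν μ E (Sum.inl i))) (hpj : ¬ p (cpt ν μ E (Sum.inr j))) :
    x i j = 0 := by
  obtain ⟨h0, h1, h2, h3⟩ := hx
  set Ip := univ.filter (fun i => p (cpt ν μ E (Sum.inl i))) with hIp
  set Jp := univ.filter (fun j => p (cpt ν μ E (Sum.inr j))) with hJp
  have hmemI : i ∈ Ip := Finset.mem_filter.2 ⟨Finset.mem_univ _, hpi⟩
  have hmemJ : j ∉ Jp := fun hc => hpj (Finset.mem_filter.1 hc).2
  -- (1): ∑_{Jp} μ = ∑_{j∈Jp} ∑_{i∈Ip} x i j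
  have h1' : ∑ j ∈ Jp, μ j = ∑ j ∈ Jp, ∑ i ∈ Ip, x i j := by
    refine Finset.sum_congr rfl fun j hj => ?_
    rw [← h2 j]
    refine (Finset.sum_subset (Finset.subset_univ _) ?_).symm
    intro i _ hi
    by_contra hc
    have hE' : (i, j) ∈ E' := by
      by_contra hE'
      exact hc (h3 i j hE')
    rw [hJp, Finset.mem_filter] at hj
    exact hi (Finset.mem_filter.2 ⟨Finset.mem_univ _, hcl i j hE' hj.2⟩)
  -- (2)
  have h2' : ∑ i ∈ Ip, ν i
      = (∑ i ∈ Ip, ∑ j ∈ Jp, x i j) + ∑ i ∈ Ip, ∑ j ∈ univ \ Jp, x i j := by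
    rw [← Finset.sum_add_distrib]
    refine Finset.sum_congr rfl fun i _ => ?_
    rw [← h1 i, ← Finset.sum_sdiff (Finset.subset_univ Jp)]
    ring
  have hbal : ∑ i ∈ Ip, ν i = ∑ j ∈ Jp, μ j := balance ν μ E hne p
  have hz : ∑ i ∈ Ip, ∑ j ∈ univ \ Jp, x i j = 0 := by
    have := h2'
    rw [hbal, h1', Finset.sum_comm (s := Jp)] at this
    linarith
  have hterm : ∀ i' ∈ Ip, ∑ j ∈ univ \ Jp, x i' j = 0 := by
    intro i' hi'
    have hnn : ∀ i' ∈ Ip, 0 ≤ ∑ j ∈ univ \ Jp, x i' j :=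
      fun i' _ => Finset.sum_nonneg fun j _ => h0 i' j
    exact (Finset.sum_eq_zero_iff_of_nonneg hnn).1 hz i' hi'
  have := (Finset.sum_eq_zero_iff_of_nonneg (fun j _ => h0 i j)).1 (hterm i hmemI) j
    (Finset.mem_sdiff.2 ⟨Finset.mem_univ _, hmemJ⟩)
  exact this

open SimpleGraph Finset Relation Sum
def eMat (i0 : Fin m) (j0 : Fin n) : Fin m → Fin n → ℝ :=
  fun i j => (if i = i0 then (1:ℝ) else 0) * (if j = j0 then 1 else 0)

lemma eMat_nonneg (i0 : Fin m) (j0 : Fin n) (i j) : 0 ≤ eMat i0 j0 i j := by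
  unfold eMat; positivity

lemma eMat_row (i0 : Fin m) (j0 : Fin n) (i : Fin m) :
    ∑ j, eMat i0 j0 i j = if i = i0 then 1 else 0 := by
  unfold eMat
  rw [← Finset.mul_sum]
  simp

lemma eMat_col (i0 : Fin m) (j0 : Fin n) (j : Fin n) :
    ∑ i, eMat i0 j0 i j = if j = j0 then 1 else 0 := by
  unfold eMat
  rw [← Finset.sum_mul]
  simp

lemma eMat_self (i0 : Fin m) (j0 : Fin n) : eMat i0 j0 i0 j0 = 1 := by simp [eMat]

lemma eMat_ne (i0 : Fin m) (j0 : Fin n) {i j} (h : (i, j) ≠ (i0, j0)) :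
    eMat i0 j0 i j = 0 := by
  unfold eMat
  rcases Decidable.em (i = i0) with h1 | h1
  · rcases Decidable.em (j = j0) with h2 | h2
    · exact absurd (by rw [h1, h2]) h
    · simp [h2]
  · simp [h1]

def rho : (Fin m ⊕ Fin n) → Fin m → ℝ := fun u i => match u with
  | Sum.inl i0 => if i = i0 then 1 else 0
  | Sum.inr _ => 0

def sig : (Fin m ⊕ Fin n) → Fin n → ℝ := fun u j => match u with
  | Sum.inl _ => 0
  | Sum.inr j0 => if j = j0 then -1 else 0

lemma sig_inr (j0 q : Fin n) : sig (Sum.inr j0 : Fin m ⊕ Fin n) q = -(if q = j0 then 1 else 0) := by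
  simp only [sig]; split_ifs <;> ring

lemma sig_inl (i : Fin m) (q : Fin n) : sig (Sum.inl i : Fin m ⊕ Fin n) q = 0 := rfl

lemma walk_circ (F : Finset (Fin m × Fin n)) {u v : Fin m ⊕ Fin n}
    (w : (bipartiteGraph F).Walk u v) :
    ∃ y : Fin m → Fin n → ℝ,
      (∀ i j, (i, j) ∉ F → y i j = 0) ∧
      (∀ i, ∑ j, y i j = rho u i - rho v i) ∧
      (∀ j, ∑ i, y i j = sig u j - sig v j) := by
  induction w with
  | nil => exact ⟨0, by simp, by simp, by simp⟩
  | @cons a b c hab w ih =>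
    obtain ⟨y, hy0, hy1, hy2⟩ := ih
    rw [bipartiteGraph, SimpleGraph.fromRel_adj] at hab
    obtain ⟨habitne, h1 | h1⟩ := hab
    · obtain ⟨i, j, rfl, rfl, hF⟩ := h1
      refine ⟨fun p q => eMat i j p q + y p q, ?_, ?_, ?_⟩
      · intro p q hpq
        show eMat i j p q + y p q = 0
        rw [hy0 p q hpq, eMat_ne i j (fun hc => hpq (by rw [hc]; exact hF)), add_zero]
      · intro p
        rw [Finset.sum_add_distrib, eMat_row, hy1]
        simp only [rho]
        ring
      · intro q
        rw [Finset.sum_add_distrib, eMat_col, hy2]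
        rw [sig_inr, sig_inl]
        ring
    · obtain ⟨i, j, rfl, rfl, hF⟩ := h1
      refine ⟨fun p q => -eMat i j p q + y p q, ?_, ?_, ?_⟩
      · intro p q hpq
        show -eMat i j p q + y p q = 0
        rw [hy0 p q hpq, eMat_ne i j (fun hc => hpq (by rw [hc]; exact hF)), neg_zero, add_zero]
      · intro p
        rw [Finset.sum_add_distrib, Finset.sum_neg_distrib, eMat_row, hy1]
        simp only [rho]
        ring
      · intro q
        rw [Finset.sum_add_distrib, Finset.sum_neg_distrib, eMat_col, hy2]
        rw [sig_inr, sig_inl]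
        ring

def R2 (ν : Fin m → ℝ) (μ : Fin n → ℝ) (E E' : Finset (Fin m × Fin n)) :
    (bipartiteGraph (Fne ν μ E)).ConnectedComponent →
    (bipartiteGraph (Fne ν μ E)).ConnectedComponent → Prop :=
  fun a b => ∃ i j, (i, j) ∈ E' ∧ cpt ν μ E (Sum.inl i) = a ∧ cpt ν μ E (Sum.inr j) = b

lemma chain_circ {E' : Finset (Fin m × Fin n)} (hFE' : Fne ν μ E ⊆ E') {a b}
    (h : Relation.ReflTransGen (R2 ν μ E E') a b) :
    ∀ i0 j0, cpt ν μ E (Sum.inl i0) = b → cpt ν μ E (Sum.inr j0) = a →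
    ∃ y : Fin m → Fin n → ℝ,
      (∀ p q, (p, q) ∉ E' → y p q = 0) ∧
      (∀ p q, (p, q) ∉ Fne ν μ E → 0 ≤ y p q) ∧
      (∀ p, ∑ q, y p q = -(if p = i0 then 1 else 0)) ∧
      (∀ q, ∑ p, y p q = -(if q = j0 then 1 else 0)) := by
  induction h using Relation.ReflTransGen.head_induction_on with
  | refl =>
    intro i0 j0 hi0 hj0
    have hreach : (bipartiteGraph (Fne ν μ E)).Reachable (Sum.inr j0) (Sum.inl i0) :=
      SimpleGraph.ConnectedComponent.eq.1 (hj0.trans hi0.symm)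
    obtain ⟨w⟩ := hreach
    obtain ⟨y, hy0, hy1, hy2⟩ := walk_circ (Fne ν μ E) w
    refine ⟨y, fun p q hpq => hy0 p q (fun hc => hpq (hFE' hc)), ?_, ?_, ?_⟩
    · intro p q hpq
      rw [hy0 p q hpq]
    · intro p
      rw [hy1 p]
      simp only [rho]
      ring
    · intro q
      rw [hy2 q, sig_inr, sig_inl]
      ring
  | head hR htail ih =>
    intro i0 j0 hi0 hj0
    obtain ⟨p, q, hpq, hp, hq⟩ := hR
    obtain ⟨y1, hy10, hy1nn, hy11, hy12⟩ := ih i0 q hi0 hq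
    have hreach : (bipartiteGraph (Fne ν μ E)).Reachable (Sum.inr j0) (Sum.inl p) :=
      SimpleGraph.ConnectedComponent.eq.1 (hj0.trans hp.symm)
    obtain ⟨w⟩ := hreach
    obtain ⟨y2, hy20, hy21, hy22⟩ := walk_circ (Fne ν μ E) w
    refine ⟨fun p' q' => y1 p' q' + eMat p q p' q' + y2 p' q', ?_, ?_, ?_, ?_⟩
    · intro p' q' hpq'
      show y1 p' q' + eMat p q p' q' + y2 p' q' = 0
      rw [hy10 p' q' hpq', hy20 p' q' (fun hc => hpq' (hFE' hc)),
        eMat_ne p q (fun hc => hpq' (by rw [hc]; exact hpq))]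
      ring
    · intro p' q' hpq'
      show 0 ≤ y1 p' q' + eMat p q p' q' + y2 p' q'
      rw [hy20 p' q' hpq', add_zero]
      exact add_nonneg (hy1nn p' q' hpq') (eMat_nonneg p q p' q')
    · intro p'
      show ∑ q', (y1 p' q' + eMat p q p' q' + y2 p' q') = _
      rw [Finset.sum_add_distrib, Finset.sum_add_distrib, eMat_row, hy11, hy21]
      simp only [rho]
      ring
    · intro q'
      show ∑ p', (y1 p' q' + eMat p q p' q' + y2 p' q') = _
      rw [Finset.sum_add_distrib, Finset.sum_add_distrib, eMat_col, hy12, hy22,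
        sig_inr, sig_inl]
      ring

lemma exists_eps {α : Type*} (S : Finset α) (f g : α → ℝ) (hf : ∀ a ∈ S, 0 < f a) :
    ∃ ε : ℝ, 0 < ε ∧ ∀ a ∈ S, ε * |g a| < f a := by
  classical
  induction S using Finset.induction_on with
  | empty => exact ⟨1, one_pos, by simp⟩
  | @insert a S ha ih =>
    obtain ⟨ε, hε, hεS⟩ := ih (fun a' ha' => hf a' (Finset.mem_insert_of_mem ha'))
    have hfa : 0 < f a := hf a (Finset.mem_insert_self a S)
    have hd : (0:ℝ) < |g a| + 1 := by positivity
    refine ⟨min ε (f a / (|g a| + 1)), lt_min hε (div_pos hfa hd), ?_⟩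
    intro a' ha'
    rcases Finset.mem_insert.1 ha' with rfl | ha'
    · calc min ε (f a' / (|g a'| + 1)) * |g a'| ≤ (f a' / (|g a'| + 1)) * |g a'| :=
            mul_le_mul_of_nonneg_right (min_le_right _ _) (abs_nonneg _)
        _ < f a' := by
            rw [div_mul_eq_mul_div, div_lt_iff₀ hd]
            have : |g a'| < |g a'| + 1 := by linarith
            calc f a' * |g a'| < f a' * (|g a'| + 1) := by
                  exact mul_lt_mul_of_pos_left this hfa
              _ = f a' * (|g a'| + 1) := rfl
    · calc min ε (f a / (|g a| + 1)) * |g a'| ≤ ε * |g a'| :=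
            mul_le_mul_of_nonneg_right (min_le_left _ _) (abs_nonneg _)
        _ < f a' := hεS a' ha'

lemma exists_xbar (hne : (transportationPolytope ν μ E).Nonempty) :
    ∃ xb ∈ transportationPolytope ν μ E, ∀ e ∈ Fne ν μ E, 0 < xb e.1 e.2 := by
  classical
  obtain ⟨x0, hx0⟩ := hne
  rcases Finset.eq_empty_or_nonempty (Fne ν μ E) with hF | hF
  · exact ⟨x0, hx0, by simp [hF]⟩
  · set F := Fne ν μ E with hFdef
    have hchoice : ∀ e : Fin m × Fin n, ∃ z ∈ transportationPolytope ν μ E,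
        e ∈ F → z e.1 e.2 ≠ 0 := by
      intro e
      by_cases he : e ∈ F
      · have : ¬ (∀ x ∈ transportationPolytope ν μ E, x e.1 e.2 = 0) := by
          intro hc
          rw [hFdef, Finset.mem_sdiff] at he
          exact he.2 (Finset.mem_filter.2 ⟨he.1, hc⟩)
        push_neg at this
        obtain ⟨z, hz, hz2⟩ := this
        exact ⟨z, hz, fun _ => hz2⟩
      · exact ⟨x0, hx0, fun hc => absurd hc he⟩
    choose g hg1 hg2 using hchoice
    have hN : (0:ℝ) < (F.card : ℝ) := by
      exact_mod_cast Finset.card_pos.2 hF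
    refine ⟨fun i j => (F.card : ℝ)⁻¹ * ∑ e ∈ F, g e i j, ⟨?_, ?_, ?_, ?_⟩, ?_⟩
    · intro i j
      exact mul_nonneg (by positivity)
        (Finset.sum_nonneg fun e _ => (hg1 e).1 i j)
    · intro i
      rw [← Finset.mul_sum, Finset.sum_comm]
      have : ∀ e ∈ F, ∑ j, g e i j = ν i := fun e _ => (hg1 e).2.1 i
      rw [Finset.sum_congr rfl this, Finset.sum_const, nsmul_eq_mul]
      field_simp
    · intro j
      rw [← Finset.mul_sum, Finset.sum_comm]
      have : ∀ e ∈ F, ∑ i, g e i j = μ j := fun e _ => (hg1 e).2.2.1 j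
      rw [Finset.sum_congr rfl this, Finset.sum_const, nsmul_eq_mul]
      field_simp
    · intro i j hij
      have hzz : ∑ e ∈ F, g e i j = 0 := Finset.sum_eq_zero (fun e _ => (hg1 e).2.2.2 i j hij)
      simp only [hzz, mul_zero]
    · intro e he
      have hpos : 0 < g e e.1 e.2 :=
        lt_of_le_of_ne ((hg1 e).1 e.1 e.2) (Ne.symm (hg2 e he))
      have hle : g e e.1 e.2 ≤ ∑ e' ∈ F, g e' e.1 e.2 :=
        Finset.single_le_sum (fun e' _ => (hg1 e').1 e.1 e.2) he
      exact mul_pos (by positivity) (lt_of_lt_of_le hpos hle)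

lemma nonredundant {E' : Finset (Fin m × Fin n)} (hEE' : E ⊆ E')
    (hne : (transportationPolytope ν μ E).Nonempty) {i0 j0} (h0 : (i0, j0) ∈ E')
    (hr : Relation.ReflTransGen (R2 ν μ E E') (cpt ν μ E (Sum.inr j0)) (cpt ν μ E (Sum.inl i0))) :
    (i0, j0) ∈ Fne ν μ E' := by
  classical
  have hFE : Fne ν μ E ⊆ E := Finset.sdiff_subset
  have hFE' : Fne ν μ E ⊆ E' := hFE.trans hEE'
  obtain ⟨y, hy0, hynn, hy1, hy2⟩ := chain_circ ν μ E hFE' hr i0 j0 rfl rfl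
  obtain ⟨xb, hxb, hxbpos⟩ := exists_xbar ν μ E hne
  set yt : Fin m → Fin n → ℝ := fun p q => eMat i0 j0 p q + y p q with hyt
  obtain ⟨ε, hε, hεlt⟩ := exists_eps (Fne ν μ E) (fun e => xb e.1 e.2)
    (fun e => yt e.1 e.2) (fun e he => hxbpos e he)
  set x' : Fin m → Fin n → ℝ := fun p q => xb p q + ε * yt p q with hx'
  have hytnn : ∀ p q, (p, q) ∉ Fne ν μ E → 0 ≤ yt p q :=
    fun p q hpq => add_nonneg (eMat_nonneg i0 j0 p q) (hynn p q hpq)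
  have hposF : ∀ p q, (p, q) ∈ Fne ν μ E → 0 < x' p q := by
    intro p q hpq
    have h1 : ε * |yt p q| < xb p q := hεlt (p, q) hpq
    have h2 : -(ε * |yt p q|) ≤ ε * yt p q := by
      rw [← mul_neg]
      exact mul_le_mul_of_nonneg_left (neg_abs_le _) hε.le
    simp only [hx']
    nlinarith [abs_nonneg (yt p q)]
  have hx'mem : x' ∈ transportationPolytope ν μ E' := by
    obtain ⟨hb0, hb1, hb2, hb3⟩ := hxb
    refine ⟨?_, ?_, ?_, ?_⟩
    · intro p q
      by_cases hpq : (p, q) ∈ Fne ν μ E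
      · exact (hposF p q hpq).le
      · exact add_nonneg (hb0 p q) (mul_nonneg hε.le (hytnn p q hpq))
    · intro p
      simp only [hx']
      rw [Finset.sum_add_distrib, ← Finset.mul_sum, hb1, Finset.sum_add_distrib,
        eMat_row, hy1]
      ring
    · intro q
      simp only [hx']
      rw [Finset.sum_add_distrib, ← Finset.mul_sum, hb2]
      have : ∑ p, yt p q = 0 := by
        simp only [hyt]
        rw [Finset.sum_add_distrib, eMat_col, hy2]
        ring
      rw [this]
      ring
    · intro p q hpq
      have h1 : xb p q = 0 := hb3 p q (fun hc => hpq (hEE' hc))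
      have h2 : y p q = 0 := hy0 p q hpq
      have h3 : eMat i0 j0 p q = 0 := eMat_ne i0 j0 (fun hc => hpq (by rw [hc]; exact h0))
      simp only [hx', hyt, h1, h2, h3]
      ring
  have hpos0 : 0 < x' i0 j0 := by
    by_cases hF0 : (i0, j0) ∈ Fne ν μ E
    · exact hposF i0 j0 hF0
    · have h1 : xb i0 j0 = 0 := supp_F ν μ E hxb hF0
      have h2 : 0 ≤ y i0 j0 := hynn i0 j0 hF0
      have : yt i0 j0 = 1 + y i0 j0 := by simp only [hyt, eMat_self]
      simp only [hx', h1, this]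
      nlinarith
  rw [Finset.mem_sdiff]
  refine ⟨h0, fun hc => ?_⟩
  have := (Finset.mem_filter.1 hc).2 x' hx'mem
  rw [this] at hpos0
  exact lt_irrefl 0 hpos0

lemma no_cycle (hne : (transportationPolytope ν μ E).Nonempty) {a b}
    (hR : R2 ν μ E E a b) (hab : a ≠ b)
    (hr : Relation.ReflTransGen (R2 ν μ E E) b a) : False := by
  obtain ⟨i, j, hij, hi, hj⟩ := hR
  have h := nonredundant ν μ E (subset_refl E) hne hij (by rw [hi, hj]; exact hr)
  exact hab (hi ▸ hj ▸ cpt_eq_of_memF ν μ E h)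


lemma exists_sink (hne : (transportationPolytope ν μ E).Nonempty)
    (s0 : (bipartiteGraph (Fne ν μ E)).ConnectedComponent) :
    ∃ s', Relation.ReflTransGen (R2 ν μ E E) s0 s' ∧ ∀ b, ¬ crpRel ν μ E s' b := by
  classical
  letI : Fintype ((bipartiteGraph (Fne ν μ E)).ConnectedComponent) := Fintype.ofFinite _
  set rset : (bipartiteGraph (Fne ν μ E)).ConnectedComponent →
      Finset ((bipartiteGraph (Fne ν μ E)).ConnectedComponent) :=
    fun c => univ.filter (fun c' => Relation.ReflTransGen (R2 ν μ E E) c c') with hrset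
  set D := univ.filter fun c => Relation.ReflTransGen (R2 ν μ E E) s0 c with hD
  obtain ⟨s', hs'D, hmin⟩ := Finset.exists_min_image D (fun c => (rset c).card)
    ⟨s0, Finset.mem_filter.2 ⟨Finset.mem_univ _, Relation.ReflTransGen.refl⟩⟩
  refine ⟨s', (Finset.mem_filter.1 hs'D).2, ?_⟩
  rintro b ⟨hbne, i, j, hij, hi, hj⟩
  have hR : R2 ν μ E E s' b := ⟨i, j, hij, hi, hj⟩
  have hsub : rset b ⊆ rset s' := by
    intro c hc
    exact Finset.mem_filter.2 ⟨Finset.mem_univ _,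
      Relation.ReflTransGen.head hR (Finset.mem_filter.1 hc).2⟩
  have hs'mem : s' ∈ rset s' :=
    Finset.mem_filter.2 ⟨Finset.mem_univ _, Relation.ReflTransGen.refl⟩
  have hs'nmem : s' ∉ rset b := by
    intro hc
    exact no_cycle ν μ E hne hR hbne (Finset.mem_filter.1 hc).2
  have hlt : (rset b).card < (rset s').card :=
    Finset.card_lt_card ((Finset.ssubset_iff_of_subset hsub).2 ⟨s', hs'mem, hs'nmem⟩)
  have hbD : b ∈ D := Finset.mem_filter.2 ⟨Finset.mem_univ _,
    ((Finset.mem_filter.1 hs'D).2).tail hR⟩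
  exact absurd (hmin b hbD) (not_le.2 hlt)

lemma exists_source (hne : (transportationPolytope ν μ E).Nonempty)
    (t0 : (bipartiteGraph (Fne ν μ E)).ConnectedComponent) :
    ∃ t', Relation.ReflTransGen (R2 ν μ E E) t' t0 ∧ ∀ a, ¬ crpRel ν μ E a t' := by
  classical
  letI : Fintype ((bipartiteGraph (Fne ν μ E)).ConnectedComponent) := Fintype.ofFinite _
  set pset : (bipartiteGraph (Fne ν μ E)).ConnectedComponent →
      Finset ((bipartiteGraph (Fne ν μ E)).ConnectedComponent) :=
    fun c => univ.filter (fun c' => Relation.ReflTransGen (R2 ν μ E E) c' c) with hpset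
  set D := univ.filter fun c => Relation.ReflTransGen (R2 ν μ E E) c t0 with hD
  obtain ⟨t', ht'D, hmin⟩ := Finset.exists_min_image D (fun c => (pset c).card)
    ⟨t0, Finset.mem_filter.2 ⟨Finset.mem_univ _, Relation.ReflTransGen.refl⟩⟩
  refine ⟨t', (Finset.mem_filter.1 ht'D).2, ?_⟩
  rintro a ⟨hane, i, j, hij, hi, hj⟩
  have hR : R2 ν μ E E a t' := ⟨i, j, hij, hi, hj⟩
  have hsub : pset a ⊆ pset t' := by
    intro c hc
    exact Finset.mem_filter.2 ⟨Finset.mem_univ _,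
      Relation.ReflTransGen.tail (Finset.mem_filter.1 hc).2 hR⟩
  have ht'mem : t' ∈ pset t' :=
    Finset.mem_filter.2 ⟨Finset.mem_univ _, Relation.ReflTransGen.refl⟩
  have ht'nmem : t' ∉ pset a := by
    intro hc
    exact no_cycle ν μ E hne hR hane (Finset.mem_filter.1 hc).2
  have hlt : (pset a).card < (pset t').card :=
    Finset.card_lt_card ((Finset.ssubset_iff_of_subset hsub).2 ⟨t', ht'mem, ht'nmem⟩)
  have haD : a ∈ D := Finset.mem_filter.2 ⟨Finset.mem_univ _,
    (Relation.ReflTransGen.single hR).trans (Finset.mem_filter.1 ht'D).2⟩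
  exact absurd (hmin a haD) (not_le.2 hlt)

lemma merge (hne : (transportationPolytope ν μ E).Nonempty)
    (istar : Fin m) (jstar : Fin n) {c}
    (h1 : Relation.ReflTransGen (R2 ν μ E E) (cpt ν μ E (Sum.inr jstar)) c)
    (h2 : Relation.ReflTransGen (R2 ν μ E E) c (cpt ν μ E (Sum.inl istar))) :
    ∀ z, cpt ν μ E z = c →
      (bipartiteGraph (Fne ν μ (insert (istar, jstar) E))).Reachable z (Sum.inr jstar) := by
  classical
  set E1 := insert (istar, jstar) E with hE1
  have hmono : bipartiteGraph (Fne ν μ E) ≤ bipartiteGraph (Fne ν μ E1) :=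
    bgraph_mono (F_mono ν μ E (Finset.subset_insert _ E))
  induction h1 with
  | refl =>
    intro z hz
    exact SimpleGraph.Reachable.mono hmono
      (SimpleGraph.ConnectedComponent.eq.1 hz)
  | tail h' hR ih =>
    rename_i c'' cc
    obtain ⟨p, q, hpq, hp, hq⟩ := hR
    have hstep : R2 ν μ E E1 (cpt ν μ E (Sum.inl istar)) (cpt ν μ E (Sum.inr jstar)) :=
      ⟨istar, jstar, Finset.mem_insert_self _ _, rfl, rfl⟩
    have hmonoR : ∀ x y, R2 ν μ E E x y → R2 ν μ E E1 x y := by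
      rintro x y ⟨i, j, hij, hi, hj⟩
      exact ⟨i, j, Finset.mem_insert_of_mem hij, hi, hj⟩
    have hrq : Relation.ReflTransGen (R2 ν μ E E1) (cpt ν μ E (Sum.inr q))
        (cpt ν μ E (Sum.inl p)) := by
      have hA : Relation.ReflTransGen (R2 ν μ E E1) cc (cpt ν μ E (Sum.inl istar)) :=
        Relation.ReflTransGen.mono hmonoR _ _ h2
      have hB : Relation.ReflTransGen (R2 ν μ E E1) (cpt ν μ E (Sum.inr jstar)) c'' :=
        Relation.ReflTransGen.mono hmonoR _ _ h'
      rw [hq, hp]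
      exact (hA.trans (Relation.ReflTransGen.head hstep hB))
    have hpqF1 : (p, q) ∈ Fne ν μ E1 :=
      nonredundant ν μ E (Finset.subset_insert _ E) hne
        (Finset.mem_insert_of_mem hpq) hrq
    have ih' := ih (Relation.ReflTransGen.head ⟨p, q, hpq, hp, hq⟩ h2)
    intro z hz
    have hzq : (bipartiteGraph (Fne ν μ E)).Reachable z (Sum.inr q) :=
      SimpleGraph.ConnectedComponent.eq.1 (hz.trans hq.symm)
    have h3 : (bipartiteGraph (Fne ν μ E1)).Reachable (Sum.inr q) (Sum.inl p) :=
      (adjF _ hpqF1).symm.reachable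
    exact ((SimpleGraph.Reachable.mono hmono hzq).trans h3).trans (ih' (Sum.inl p) hp)

lemma edge_classify (hne : (transportationPolytope ν μ E).Nonempty)
    {u : Fin m} {v : Fin n} {i : Fin m} {j : Fin n}
    (hij : (i, j) ∈ Fne ν μ (insert (u, v) E)) :
    cpt ν μ E (Sum.inl i) = cpt ν μ E (Sum.inr j) ∨
    ((Relation.ReflTransGen (R2 ν μ E E) (cpt ν μ E (Sum.inr v)) (cpt ν μ E (Sum.inl i)) ∧
      Relation.ReflTransGen (R2 ν μ E E) (cpt ν μ E (Sum.inl i)) (cpt ν μ E (Sum.inl u))) ∧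
     (Relation.ReflTransGen (R2 ν μ E E) (cpt ν μ E (Sum.inr v)) (cpt ν μ E (Sum.inr j)) ∧
      Relation.ReflTransGen (R2 ν μ E E) (cpt ν μ E (Sum.inr j)) (cpt ν μ E (Sum.inl u)))) := by
  classical
  by_cases hab : cpt ν μ E (Sum.inl i) = cpt ν μ E (Sum.inr j)
  · exact Or.inl hab
  right
  rw [Finset.mem_sdiff] at hij
  obtain ⟨hijE', hijnr⟩ := hij
  have hxne : ∃ x ∈ transportationPolytope ν μ (insert (u, v) E), x i j ≠ 0 := by
    by_contra hc
    push_neg at hc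
    exact hijnr (Finset.mem_filter.2 ⟨hijE', hc⟩)
  obtain ⟨x', hx', hx'ne⟩ := hxne
  -- Claim 1 : rch (cpt inr j) (cpt inl u)
  have claim1 : Relation.ReflTransGen (R2 ν μ E E) (cpt ν μ E (Sum.inr j))
      (cpt ν μ E (Sum.inl u)) := by
    by_contra hc
    refine hx'ne (binding ν μ E hne
      (fun c => ¬ Relation.ReflTransGen (R2 ν μ E E) (cpt ν μ E (Sum.inr j)) c) ?_ hx' ?_ ?_)
    · intro i' j' hi'j' hpj' hrbi'
      rcases Finset.mem_insert.1 hi'j' with heq | hE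
      · rw [Prod.mk.injEq] at heq
        rw [heq.1] at hrbi'
        exact hc hrbi'
      · exact hpj' (hrbi'.tail ⟨i', j', hE, rfl, rfl⟩)
    · rcases Finset.mem_insert.1 hijE' with heq | hE
      · rw [Prod.mk.injEq] at heq
        intro hrba
        rw [heq.1] at hrba
        exact hc hrba
      · intro hrba
        exact no_cycle ν μ E hne ⟨i, j, hE, rfl, rfl⟩ hab hrba
    · intro hcc
      exact hcc Relation.ReflTransGen.refl
  -- Claim 2 : rch (cpt inr v) (cpt inl i)
  have claim2 : Relation.ReflTransGen (R2 ν μ E E) (cpt ν μ E (Sum.inr v))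
      (cpt ν μ E (Sum.inl i)) := by
    by_contra hc
    refine hx'ne (binding ν μ E hne
      (fun c => Relation.ReflTransGen (R2 ν μ E E) c (cpt ν μ E (Sum.inl i))) ?_ hx' ?_ ?_)
    · intro i' j' hi'j' hpj'
      rcases Finset.mem_insert.1 hi'j' with heq | hE
      · rw [Prod.mk.injEq] at heq
        exfalso
        rw [heq.2] at hpj'
        exact hc hpj'
      · exact Relation.ReflTransGen.head ⟨i', j', hE, rfl, rfl⟩ hpj'
    · exact Relation.ReflTransGen.refl
    · rcases Finset.mem_insert.1 hijE' with heq | hE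
      · intro hrba
        rw [Prod.mk.injEq] at heq
        rw [heq.2] at hrba
        exact hc hrba
      · intro hrba
        exact no_cycle ν μ E hne ⟨i, j, hE, rfl, rfl⟩ hab hrba
  -- assemble
  have haa0 : Relation.ReflTransGen (R2 ν μ E E) (cpt ν μ E (Sum.inl i))
      (cpt ν μ E (Sum.inl u)) := by
    rcases Finset.mem_insert.1 hijE' with heq | hE
    · rw [Prod.mk.injEq] at heq
      rw [heq.1]
    · exact Relation.ReflTransGen.head ⟨i, j, hE, rfl, rfl⟩ claim1
  have hb0b : Relation.ReflTransGen (R2 ν μ E E) (cpt ν μ E (Sum.inr v))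
      (cpt ν μ E (Sum.inr j)) := by
    rcases Finset.mem_insert.1 hijE' with heq | hE
    · rw [Prod.mk.injEq] at heq
      rw [heq.2]
    · exact claim2.tail ⟨i, j, hE, rfl, rfl⟩
  exact ⟨⟨claim2, haa0⟩, ⟨hb0b, claim1⟩⟩

lemma descend (u : Fin m) (v : Fin n)
    (φ : (bipartiteGraph (Fne ν μ E)).ConnectedComponent →
      (bipartiteGraph (Fne ν μ E)).ConnectedComponent)
    (hφ : ∀ i j, (i, j) ∈ Fne ν μ (insert (u, v) E) →
      φ (cpt ν μ E (Sum.inl i)) = φ (cpt ν μ E (Sum.inr j))) :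
    ∃ ψ : (bipartiteGraph (Fne ν μ (insert (u, v) E))).ConnectedComponent →
      (bipartiteGraph (Fne ν μ E)).ConnectedComponent,
      ∀ z, ψ (cpt ν μ (insert (u, v) E) z) = φ (cpt ν μ E z) := by
  classical
  have hwalk : ∀ (z w : Fin m ⊕ Fin n)
      (p : (bipartiteGraph (Fne ν μ (insert (u, v) E))).Walk z w),
      φ (cpt ν μ E z) = φ (cpt ν μ E w) := by
    intro z w p
    induction p with
    | nil => rfl
    | cons hadj p ih =>
      rw [← ih]
      rw [bipartiteGraph, SimpleGraph.fromRel_adj] at hadj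
      obtain ⟨-, h | h⟩ := hadj
      · obtain ⟨i, j, rfl, rfl, hijF⟩ := h
        exact hφ i j hijF
      · obtain ⟨i, j, rfl, rfl, hijF⟩ := h
        exact (hφ i j hijF).symm
  exact ⟨SimpleGraph.ConnectedComponent.lift (fun z => φ (cpt ν μ E z))
    (fun z w p _ => hwalk z w p), fun z => rfl⟩

lemma count_upper {α β : Type*} [Fintype α] [Fintype β] (f : α → β)
    (hf : Function.Surjective f) (S : Finset α) (hS : S.Nonempty) (y0 : β)
    (hconst : ∀ a ∈ S, f a = y0) :
    Fintype.card β ≤ Fintype.card α - S.card + 1 := by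
  classical
  have himg : (univ : Finset β) = univ.image f :=
    (Finset.image_univ_of_surjective hf).symm
  have hsub : univ.image f ⊆ ((univ \ S).image f) ∪ {y0} := by
    intro b hb
    obtain ⟨a, -, rfl⟩ := Finset.mem_image.1 hb
    by_cases hamem : a ∈ S
    · exact Finset.mem_union_right _ (by simp [hconst a hamem])
    · exact Finset.mem_union_left _
        (Finset.mem_image.2 ⟨a, Finset.mem_sdiff.2 ⟨Finset.mem_univ _, hamem⟩, rfl⟩)
  calc Fintype.card β = (univ.image f).card := by rw [← himg, Finset.card_univ]
    _ ≤ ((univ \ S).image f).card + 1 := by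
        refine (Finset.card_le_card hsub).trans ?_
        exact (Finset.card_union_le _ _).trans (by simp)
    _ ≤ (univ \ S).card + 1 := Nat.add_le_add_right Finset.card_image_le 1
    _ = Fintype.card α - S.card + 1 := by
        rw [Finset.card_sdiff_of_subset (Finset.subset_univ S), Finset.card_univ]

lemma count_lower {α β : Type*} [Fintype α] [Fintype β] [DecidableEq α]
    (f : α → β) (g : β → α) (φ : α → α) (h : ∀ a, g (f a) = φ a) :
    (univ.image φ).card ≤ Fintype.card β := by
  classical
  have hsub : univ.image φ ⊆ univ.image g := by
    intro a ha
    obtain ⟨a', -, rfl⟩ := Finset.mem_image.1 ha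
    exact Finset.mem_image.2 ⟨f a', Finset.mem_univ _, h a'⟩
  exact (Finset.card_le_card hsub).trans (Finset.card_image_le.trans (by simp))

lemma image_lower {α : Type*} [Fintype α] [DecidableEq α] (M : Finset α) (m0 : α)
    (hm0 : m0 ∈ M) (φ : α → α) (hid : ∀ a ∉ M, φ a = a) (hm : φ m0 = m0) :
    Fintype.card α - M.card + 1 ≤ (univ.image φ).card := by
  have hsub : (univ \ M) ∪ {m0} ⊆ univ.image φ := by
    intro a ha
    rcases Finset.mem_union.1 ha with ha | ha
    · exact Finset.mem_image.2 ⟨a, Finset.mem_univ _, hid a (Finset.mem_sdiff.1 ha).2⟩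
    · rw [Finset.mem_singleton.1 ha]
      exact Finset.mem_image.2 ⟨m0, Finset.mem_univ _, hm⟩
  calc Fintype.card α - M.card + 1 = ((univ \ M) ∪ {m0}).card := by
        rw [Finset.card_union_of_disjoint
          (Finset.disjoint_singleton_right.2 (by simp [hm0])),
          Finset.card_sdiff_of_subset (Finset.subset_univ M), Finset.card_univ, Finset.card_singleton]
    _ ≤ _ := Finset.card_le_card hsub


lemma lower_bound (hne : (transportationPolytope ν μ E).Nonempty) (u : Fin m) (v : Fin n)
    [Fintype ((bipartiteGraph (Fne ν μ E)).ConnectedComponent)]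
    [Fintype ((bipartiteGraph (Fne ν μ (insert (u, v) E))).ConnectedComponent)]
    (hreach : Relation.ReflTransGen (R2 ν μ E E) (cpt ν μ E (Sum.inr v))
      (cpt ν μ E (Sum.inl u))) :
    Fintype.card ((bipartiteGraph (Fne ν μ E)).ConnectedComponent) -
      (univ.filter fun c => Relation.ReflTransGen (R2 ν μ E E) (cpt ν μ E (Sum.inr v)) c ∧
        Relation.ReflTransGen (R2 ν μ E E) c (cpt ν μ E (Sum.inl u))).card + 1
      ≤ Fintype.card ((bipartiteGraph (Fne ν μ (insert (u, v) E))).ConnectedComponent) := by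
  classical
  set M := univ.filter fun c => Relation.ReflTransGen (R2 ν μ E E) (cpt ν μ E (Sum.inr v)) c ∧
        Relation.ReflTransGen (R2 ν μ E E) c (cpt ν μ E (Sum.inl u)) with hM
  set φ : (bipartiteGraph (Fne ν μ E)).ConnectedComponent →
      (bipartiteGraph (Fne ν μ E)).ConnectedComponent :=
    fun c => if c ∈ M then cpt ν μ E (Sum.inr v) else c with hφdef
  have hφ : ∀ i j, (i, j) ∈ Fne ν μ (insert (u, v) E) →
      φ (cpt ν μ E (Sum.inl i)) = φ (cpt ν μ E (Sum.inr j)) := by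
    intro i j hijF
    rcases edge_classify ν μ E hne hijF with hsame | ⟨⟨h1, h2⟩, ⟨h3, h4⟩⟩
    · rw [hsame]
    · have hi : cpt ν μ E (Sum.inl i) ∈ M :=
        Finset.mem_filter.2 ⟨Finset.mem_univ _, h1, h2⟩
      have hj : cpt ν μ E (Sum.inr j) ∈ M :=
        Finset.mem_filter.2 ⟨Finset.mem_univ _, h3, h4⟩
      show (if _ ∈ M then _ else _) = (if _ ∈ M then _ else _)
      rw [if_pos hi, if_pos hj]
  obtain ⟨ψ, hψ⟩ := descend ν μ E u v φ hφ
  set π : (bipartiteGraph (Fne ν μ E)).ConnectedComponent →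
      (bipartiteGraph (Fne ν μ (insert (u, v) E))).ConnectedComponent :=
    SimpleGraph.ConnectedComponent.map
      (SimpleGraph.Hom.ofLE (bgraph_mono (F_mono ν μ E
        (Finset.subset_insert _ E)))) with hπ
  have hcomm : ∀ c, ψ (π c) = φ c := by
    intro c
    induction c using SimpleGraph.ConnectedComponent.ind with
    | _ z => exact hψ z
  have hb0M : cpt ν μ E (Sum.inr v) ∈ M :=
    Finset.mem_filter.2 ⟨Finset.mem_univ _, Relation.ReflTransGen.refl, hreach⟩
  have h1 : Fintype.card ((bipartiteGraph (Fne ν μ E)).ConnectedComponent) - M.card + 1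
      ≤ (univ.image φ).card := by
    refine image_lower M (cpt ν μ E (Sum.inr v)) hb0M φ ?_ ?_
    · intro a ha
      show (if a ∈ M then _ else a) = a
      rw [if_neg ha]
    · show (if _ ∈ M then _ else _) = _
      rw [if_pos hb0M]
  have h2 : (univ.image φ).card ≤
      Fintype.card ((bipartiteGraph (Fne ν μ (insert (u, v) E))).ConnectedComponent) :=
    count_lower π ψ φ hcomm
  exact h1.trans h2

lemma lower_bound_unreach (hne : (transportationPolytope ν μ E).Nonempty)
    (u : Fin m) (v : Fin n)
    [Fintype ((bipartiteGraph (Fne ν μ E)).ConnectedComponent)]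
    [Fintype ((bipartiteGraph (Fne ν μ (insert (u, v) E))).ConnectedComponent)]
    (hnr : ¬ Relation.ReflTransGen (R2 ν μ E E) (cpt ν μ E (Sum.inr v))
      (cpt ν μ E (Sum.inl u))) :
    Fintype.card ((bipartiteGraph (Fne ν μ E)).ConnectedComponent)
      ≤ Fintype.card ((bipartiteGraph (Fne ν μ (insert (u, v) E))).ConnectedComponent) := by
  classical
  have hφ : ∀ i j, (i, j) ∈ Fne ν μ (insert (u, v) E) →
      id (cpt ν μ E (Sum.inl i)) = id (cpt ν μ E (Sum.inr j)) := by
    intro i j hijF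
    rcases edge_classify ν μ E hne hijF with hsame | ⟨⟨h1, h2⟩, -⟩
    · exact hsame
    · exact absurd (h1.trans h2) hnr
  obtain ⟨ψ, hψ⟩ := descend ν μ E u v id hφ
  set π : (bipartiteGraph (Fne ν μ E)).ConnectedComponent →
      (bipartiteGraph (Fne ν μ (insert (u, v) E))).ConnectedComponent :=
    SimpleGraph.ConnectedComponent.map
      (SimpleGraph.Hom.ofLE (bgraph_mono (F_mono ν μ E
        (Finset.subset_insert _ E)))) with hπ
  have hcomm : ∀ c, ψ (π c) = id c := by
    intro c
    induction c using SimpleGraph.ConnectedComponent.ind with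
    | _ z => exact hψ z
  have := count_lower π ψ id hcomm
  rwa [Finset.image_id, Finset.card_univ] at this

end Aux

/-- there exist a sink `l_⋆` and a source `l^⋆` of the CRP-graph such that adding
any edge from the demand side of `l_⋆` to the supply side of `l^⋆` minimizes the resulting ERP
number over all possible single added edges. -/
theorem stmt_17 {m n : ℕ} (hm : 1 ≤ m) (hn : 1 ≤ n)
    (ν : Fin m → ℝ) (μ : Fin n → ℝ) (E : Finset (Fin m × Fin n))
    (hν : ∀ i, 0 < ν i) (hμ : ∀ j, 0 < μ j)
    (hne : (transportationPolytope ν μ E).Nonempty) :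
    let G := bipartiteGraph (E \ redundantEdges ν μ E)
    ∃ lsink lsource : G.ConnectedComponent,
      (∀ b, ¬ crpRel ν μ E lsink b) ∧
      (∀ a, ¬ crpRel ν μ E a lsource) ∧
      ∀ (istar : Fin m) (jstar : Fin n),
        G.connectedComponentMk (Sum.inl istar) = lsink →
        G.connectedComponentMk (Sum.inr jstar) = lsource →
        ∀ (u : Fin m) (v : Fin n),
          erpNumber ν μ (insert (istar, jstar) E) ≤ erpNumber ν μ (insert (u, v) E) := by
  classical
  intro G
  letI instF : Fintype ((bipartiteGraph (Fne ν μ E)).ConnectedComponent) := Fintype.ofFinite _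
  have hPne : ((Finset.univ : Finset ((bipartiteGraph (Fne ν μ E)).ConnectedComponent ×
      (bipartiteGraph (Fne ν μ E)).ConnectedComponent)).filter fun pr =>
        Relation.ReflTransGen (R2 ν μ E E) pr.1 pr.2).Nonempty := by
    refine ⟨(cpt ν μ E (Sum.inl ⟨0, hm⟩), cpt ν μ E (Sum.inl ⟨0, hm⟩)), ?_⟩
    exact Finset.mem_filter.2 ⟨Finset.mem_univ _, Relation.ReflTransGen.refl⟩
  obtain ⟨ts, htsP, hmax⟩ := Finset.exists_max_image _ (fun pr :
      (bipartiteGraph (Fne ν μ E)).ConnectedComponent ×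
      (bipartiteGraph (Fne ν μ E)).ConnectedComponent =>
    (Finset.univ.filter fun c => Relation.ReflTransGen (R2 ν μ E E) pr.1 c ∧
      Relation.ReflTransGen (R2 ν μ E E) c pr.2).card) hPne
  have hts : Relation.ReflTransGen (R2 ν μ E E) ts.1 ts.2 := (Finset.mem_filter.1 htsP).2
  obtain ⟨s', hss', hsink⟩ := exists_sink ν μ E hne ts.2
  obtain ⟨t', ht't, hsource⟩ := exists_source ν μ E hne ts.1
  refine ⟨s', t', hsink, hsource, ?_⟩
  intro istar jstar hist hjst u v
  have hist' : cpt ν μ E (Sum.inl istar) = s' := hist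
  have hjst' : cpt ν μ E (Sum.inr jstar) = t' := hjst
  have ht's' : Relation.ReflTransGen (R2 ν μ E E) t' s' := ht't.trans (hts.trans hss')
  set Mstar := Finset.univ.filter fun c => Relation.ReflTransGen (R2 ν μ E E) t' c ∧
    Relation.ReflTransGen (R2 ν μ E E) c s' with hMstar
  have hs'M : s' ∈ Mstar :=
    Finset.mem_filter.2 ⟨Finset.mem_univ _, ht's', Relation.ReflTransGen.refl⟩
  have hMsmax : ∀ pr : (bipartiteGraph (Fne ν μ E)).ConnectedComponent ×
      (bipartiteGraph (Fne ν μ E)).ConnectedComponent,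
      Relation.ReflTransGen (R2 ν μ E E) pr.1 pr.2 →
      (Finset.univ.filter fun c => Relation.ReflTransGen (R2 ν μ E E) pr.1 c ∧
        Relation.ReflTransGen (R2 ν μ E E) c pr.2).card ≤ Mstar.card := by
    intro pr hpr
    have h1 := hmax pr (Finset.mem_filter.2 ⟨Finset.mem_univ _, hpr⟩)
    have h2 : (Finset.univ.filter fun c => Relation.ReflTransGen (R2 ν μ E E) ts.1 c ∧
        Relation.ReflTransGen (R2 ν μ E E) c ts.2).card ≤ Mstar.card := by
      apply Finset.card_le_card
      intro c hc
      obtain ⟨-, hc1, hc2⟩ := Finset.mem_filter.1 hc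
      exact Finset.mem_filter.2 ⟨Finset.mem_univ _, ht't.trans hc1, hc2.trans hss'⟩
    exact h1.trans h2
  -- upper bound
  set E1 := insert (istar, jstar) E with hE1
  letI instF1 : Fintype ((bipartiteGraph (Fne ν μ E1)).ConnectedComponent) := Fintype.ofFinite _
  set π1 : (bipartiteGraph (Fne ν μ E)).ConnectedComponent →
      (bipartiteGraph (Fne ν μ E1)).ConnectedComponent :=
    SimpleGraph.ConnectedComponent.map
      (SimpleGraph.Hom.ofLE (bgraph_mono (F_mono ν μ E
        (Finset.subset_insert _ E)))) with hπ1
  have hπ1surj : Function.Surjective π1 := by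
    intro c'
    induction c' using SimpleGraph.ConnectedComponent.ind with
    | _ z => exact ⟨cpt ν μ E z, rfl⟩
  have hconst : ∀ c ∈ Mstar, π1 c = cpt ν μ E1 (Sum.inr jstar) := by
    intro c
    induction c using SimpleGraph.ConnectedComponent.ind with
    | _ z =>
      intro hc
      obtain ⟨-, hc1, hc2⟩ := Finset.mem_filter.1 hc
      have hreach := merge ν μ E hne istar jstar
        (by rw [hjst']; exact hc1) (by rw [hist']; exact hc2) z rfl
      exact SimpleGraph.ConnectedComponent.eq.2 hreach
  have hupper : Fintype.card ((bipartiteGraph (Fne ν μ E1)).ConnectedComponent)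
      ≤ Fintype.card ((bipartiteGraph (Fne ν μ E)).ConnectedComponent) - Mstar.card + 1 :=
    count_upper π1 hπ1surj Mstar ⟨s', hs'M⟩ _ hconst
  -- lower bound
  letI instF2 : Fintype ((bipartiteGraph (Fne ν μ (insert (u, v) E))).ConnectedComponent) :=
    Fintype.ofFinite _
  have herp1 : erpNumber ν μ E1
      = Fintype.card ((bipartiteGraph (Fne ν μ E1)).ConnectedComponent) :=
    Nat.card_eq_fintype_card
  have herp2 : erpNumber ν μ (insert (u, v) E)
      = Fintype.card ((bipartiteGraph (Fne ν μ (insert (u, v) E))).ConnectedComponent) :=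
    Nat.card_eq_fintype_card
  have hM1 : 1 ≤ Mstar.card := Finset.card_pos.2 ⟨s', hs'M⟩
  have hMle : Mstar.card ≤ Fintype.card ((bipartiteGraph (Fne ν μ E)).ConnectedComponent) := by
    rw [← Finset.card_univ]
    exact Finset.card_filter_le _ _
  rw [herp1, herp2]
  by_cases hre : Relation.ReflTransGen (R2 ν μ E E) (cpt ν μ E (Sum.inr v))
      (cpt ν μ E (Sum.inl u))
  · have hlow := lower_bound ν μ E hne u v hre
    have hcard : (Finset.univ.filter fun c =>
        Relation.ReflTransGen (R2 ν μ E E) (cpt ν μ E (Sum.inr v)) c ∧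
        Relation.ReflTransGen (R2 ν μ E E) c (cpt ν μ E (Sum.inl u))).card ≤ Mstar.card :=
      hMsmax (cpt ν μ E (Sum.inr v), cpt ν μ E (Sum.inl u)) hre
    omega
  · have hlow := lower_bound_unreach ν μ E hne u v hre
    omega
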